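/- Let v : ℝ → ℝ be C² with v'(s) ≠ 0 for all s, and let s : U → ℝ be a C¹ function on an open set U ⊆ ℝ² (coordinates (p,q)) satisfying q = s(p,q) + p / v'(s(p,q))² on U. Define L(p,q) = v(s(p,q)) + 2p / v'(s(p,q)). Then L satisfies the Courant-Hilbert equation L_p · L_q = 1 at every point of U where 1 − 2p·v''(s)/v'(s)³ ≠ 0. -/

import Mathlib

/-- The general solution of the Courant-Hilbert equation L_p · L_q = 1, built from a
function of one variable v(s) via the implicit relation q = s + p / v'(s)². -/
theorem courant_hilbert_solution (v : ℝ → ℝ) (hv : ContDiff ℝ 2 v)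
    (hv' : ∀ t : ℝ, deriv v t ≠ 0)
    (U : Set (ℝ × ℝ)) (hU : IsOpen U)
    (s : ℝ → ℝ → ℝ) (hs : ContDiffOn ℝ 1 (fun x : ℝ × ℝ => s x.1 x.2) U)
    (hrel : ∀ x ∈ U, x.2 = s x.1 x.2 + x.1 / (deriv v (s x.1 x.2)) ^ 2)
    (L : ℝ → ℝ → ℝ)
    (hL : ∀ p q : ℝ, L p q = v (s p q) + 2 * p / deriv v (s p q)) :
    ∀ x ∈ U,
      1 - 2 * x.1 * deriv (deriv v) (s x.1 x.2) / (deriv v (s x.1 x.2)) ^ 3 ≠ 0 →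
      deriv (fun p => L p x.2) x.1 * deriv (fun q => L x.1 q) x.2 = 1 := by
  intro x hx hne
  obtain ⟨p, q⟩ := x
  simp only at hne ⊢
  -- basic differentiability facts
  have hv1 : Differentiable ℝ v := hv.differentiable (by norm_num)
  have hv2 : ContDiff ℝ 1 (deriv v) := by
    have := (contDiff_succ_iff_deriv.mp (by exact_mod_cast hv : ContDiff ℝ ((1:ℕ) + 1) v)).2
    first
      | exact_mod_cast this
      | exact_mod_cast this.2
  have hv1' : Differentiable ℝ (deriv v) := hv2.differentiable (by norm_num)
  have hfd : DifferentiableAt ℝ (fun y : ℝ × ℝ => s y.1 y.2) (p, q) :=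
    (hs.contDiffAt (hU.mem_nhds hx)).differentiableAt (by norm_num)
  -- partial derivatives of s
  have hsp : DifferentiableAt ℝ (fun p' => s p' q) p := by
    exact hfd.comp p ((differentiableAt_id.prodMk (differentiableAt_const q) : DifferentiableAt ℝ (fun x : ℝ => (x, q)) p))
  have hsq : DifferentiableAt ℝ (fun q' => s p q') q := by
    exact hfd.comp q (((differentiableAt_const p).prodMk differentiableAt_id))
  set t := s p q with ht
  set A := deriv v t with hA
  set B := deriv (deriv v) t with hB
  have hAne : A ≠ 0 := hv' t
  set a := deriv (fun p' => s p' q) p with ha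
  set b := deriv (fun q' => s p q') q with hb
  have haD : HasDerivAt (fun p' => s p' q) a p := hsp.hasDerivAt
  have hbD : HasDerivAt (fun q' => s p q') b q := hsq.hasDerivAt
  have hvD : HasDerivAt v A t := hv1.differentiableAt.hasDerivAt
  have hv'D : HasDerivAt (deriv v) B t := hv1'.differentiableAt.hasDerivAt
  -- chain rules
  have hva : HasDerivAt (fun p' => v (s p' q)) (A * a) p := hvD.comp p haD
  have hvb : HasDerivAt (fun q' => v (s p q')) (A * b) q := hvD.comp q hbD
  have hv'a : HasDerivAt (fun p' => deriv v (s p' q)) (B * a) p := by have := hv'D.comp p haD; exact this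
  have hv'b : HasDerivAt (fun q' => deriv v (s p q')) (B * b) q := hv'D.comp q hbD
  -- differentiate the implicit relation in p
  have hU1 : ∀ᶠ p' in nhds p, (p', q) ∈ U := by
    have : ContinuousAt (fun p' : ℝ => (p', q)) p := (continuous_id.prodMk continuous_const).continuousAt
    exact this (hU.mem_nhds hx)
  have hU2 : ∀ᶠ q' in nhds q, (p, q') ∈ U := by
    have : ContinuousAt (fun q' : ℝ => (p, q')) q := (continuous_const.prodMk continuous_id).continuousAt
    exact this (hU.mem_nhds hx)
  have hrel1 : HasDerivAt (fun p' => s p' q + p' / (deriv v (s p' q)) ^ 2)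
      (a + (1 * A ^ 2 - p * ((2 : ℕ) * A ^ 1 * (B * a))) / (A ^ 2) ^ 2) p := by
    exact haD.add ((hasDerivAt_id p).div (hv'a.pow 2) (pow_ne_zero 2 hAne))
  have hrel1' : HasDerivAt (fun _ : ℝ => q) (a + (1 * A ^ 2 - p * ((2 : ℕ) * A ^ 1 * (B * a))) / (A ^ 2) ^ 2) p := by
    refine hrel1.congr_of_eventuallyEq ?_
    filter_upwards [hU1] with p' hp' using (hrel (p', q) hp').symm ▸ rfl
  have E1 : a + (1 * A ^ 2 - p * ((2 : ℕ) * A ^ 1 * (B * a))) / (A ^ 2) ^ 2 = 0 :=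
    hrel1'.unique (hasDerivAt_const p q)
  -- differentiate the implicit relation in q
  have hrel2 : HasDerivAt (fun q' => s p q' + p / (deriv v (s p q')) ^ 2)
      (b + (0 * A ^ 2 - p * ((2 : ℕ) * A ^ 1 * (B * b))) / (A ^ 2) ^ 2) q := by
    exact hbD.add ((hasDerivAt_const q p).div (hv'b.pow 2) (pow_ne_zero 2 hAne))
  have hrel2' : HasDerivAt (fun q' : ℝ => q') (b + (0 * A ^ 2 - p * ((2 : ℕ) * A ^ 1 * (B * b))) / (A ^ 2) ^ 2) q := by
    refine hrel2.congr_of_eventuallyEq ?_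
    filter_upwards [hU2] with q' hq' using (hrel (p, q') hq').symm ▸ rfl
  have E2 : b + (0 * A ^ 2 - p * ((2 : ℕ) * A ^ 1 * (B * b))) / (A ^ 2) ^ 2 = 1 :=
    hrel2'.unique (hasDerivAt_id q)
  -- derivatives of L
  have hLp : HasDerivAt (fun p' => L p' q) (A * a + (2 * A - 2 * p * (B * a)) / A ^ 2) p := by
    have h1 : HasDerivAt (fun p' => v (s p' q) + 2 * p' / deriv v (s p' q))
        (A * a + (2 * A - 2 * p * (B * a)) / A ^ 2) p := by
      have h2 : HasDerivAt (fun p' : ℝ => 2 * p') 2 p := by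
        simpa using (hasDerivAt_id p).const_mul (2 : ℝ)
      have := hva.fun_add (h2.fun_div hv'a hAne)
      convert this using 1 <;> ring
    refine h1.congr_of_eventuallyEq ?_
    filter_upwards with p' using hL p' q
  have hLq : HasDerivAt (fun q' => L p q') (A * b + (0 - 2 * p * (B * b)) / A ^ 2) q := by
    have h1 : HasDerivAt (fun q' => v (s p q') + 2 * p / deriv v (s p q'))
        (A * b + (0 - 2 * p * (B * b)) / A ^ 2) q := by
      have := hvb.fun_add ((hasDerivAt_const q (2 * p)).fun_div hv'b hAne)
      exact this.congr_deriv (by ring)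
    refine h1.congr_of_eventuallyEq ?_
    filter_upwards with q' using hL p q'
  rw [hLp.deriv, hLq.deriv]
  -- now the algebra
  have hD : A ^ 3 - 2 * p * B ≠ 0 := by
    intro h
    apply hne
    field_simp
    linarith [h]
  field_simp at E1 E2 ⊢
  push_cast at E1 E2
  have e1 : a * (A ^ 3 - 2 * p * B) = -A := by
    have h : A * (a * (A ^ 3 - 2 * p * B) + A) = 0 := by linear_combination A * E1
    have h2 := (mul_eq_zero.mp h).resolve_left hAne
    linarith
  have e2 : b * (A ^ 3 - 2 * p * B) = A ^ 3 := by
    have h : A * (b * (A ^ 3 - 2 * p * B) - A ^ 3) = 0 := by linear_combination A * E2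
    have h2 := (mul_eq_zero.mp h).resolve_left hAne
    linarith
  linear_combination (b * (A ^ 3 - 2 * p * B)) * e1 + A * e2
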